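/- For all integers d ≥ 1 and r ≥ 1 and every set A ⊆ {0,…,d−1}^r, there exist a matrix A' ∈ ℤ^{m'×n'} and a vector b' ∈ ℤ^{m'} with n' ≤ r + 2r·d^r and m' ≤ 2r + (6r+1)·d^r, all entries of A' and b' in {−d,…,d}, such that the set of feasible boundary assignments of the system A'x ≤ b' with the first r variables as boundary is exactly A; that is, for every integer vector a ∈ ℤ^r, some integer solution of A'x ≤ b' has first r coordinates equal to a if and only if a ∈ A. -/

import Mathlib

/-- A family of nonnegative integers summing to `1` has exactly one entry equal to `1`
and all others `0`. -/
lemma exists_indicator_of_sum_one {k : ℕ} (y : Fin k → ℤ)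
    (hpos : ∀ t, 0 ≤ y t) (hsum : ∑ t, y t = 1) :
    ∃ t0, y t0 = 1 ∧ ∀ s, s ≠ t0 → y s = 0 := by
  have h1 : ∃ t0, 1 ≤ y t0 := by
    by_contra h
    push_neg at h
    have : ∑ t, y t ≤ 0 := Finset.sum_nonpos fun t _ => by linarith [h t]
    omega
  obtain ⟨t0, ht0⟩ := h1
  have hsplit : y t0 + ∑ s ∈ Finset.univ.erase t0, y s = 1 := by
    rw [Finset.add_sum_erase _ y (Finset.mem_univ t0)]
    exact hsum
  have hrest_nonneg : 0 ≤ ∑ s ∈ Finset.univ.erase t0, y s :=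
    Finset.sum_nonneg fun s _ => hpos s
  have hrest : ∑ s ∈ Finset.univ.erase t0, y s = 0 := by linarith
  have hzero : ∀ s ∈ Finset.univ.erase t0, y s = 0 :=
    (Finset.sum_eq_zero_iff_of_nonneg fun s _ => hpos s).mp hrest
  exact ⟨t0, by linarith, fun s hs => hzero s (Finset.mem_erase.mpr ⟨hs, Finset.mem_univ s⟩)⟩

set_option maxHeartbeats 1600000 in
/-- Every set `A ⊆ {0,…,d-1}^r` of boundary assignments is realizable as the set
of feasible boundary assignments of an `r`-boundaried ILP with at most
`r + 2r·d^r` variables, at most `2r + (6r+1)·d^r` constraints, and all entries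
in `{-d,…,d}`. -/
theorem every_boundary_set_realizable (d r : ℕ) (hd : 1 ≤ d) (hr : 1 ≤ r)
    (A : Set (Fin r → ℤ))
    (hA : ∀ f ∈ A, ∀ i, 0 ≤ f i ∧ f i ≤ (d : ℤ) - 1) :
    ∃ (m' n' : ℕ), n' ≤ r + 2 * r * d ^ r ∧ m' ≤ 2 * r + (6 * r + 1) * d ^ r ∧
      ∃ (hrn : r ≤ n') (A' : Matrix (Fin m') (Fin n') ℤ) (b' : Fin m' → ℤ),
        (∀ i j, -(d : ℤ) ≤ A' i j ∧ A' i j ≤ (d : ℤ)) ∧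
        (∀ i, -(d : ℤ) ≤ b' i ∧ b' i ≤ (d : ℤ)) ∧
        ∀ a : Fin r → ℤ,
          (∃ x : Fin n' → ℤ, A'.mulVec x ≤ b' ∧
            ∀ j : Fin r, x (Fin.castLE hrn j) = a j) ↔ a ∈ A := by
  classical
  have hdz : (1 : ℤ) ≤ (d : ℤ) := by exact_mod_cast hd
  -- `A` is finite
  have hAfin : A.Finite := by
    apply Set.Finite.subset (Set.finite_Icc (fun _ : Fin r => (0 : ℤ))
      (fun _ : Fin r => (d : ℤ) - 1))
    intro f hf
    rw [Set.mem_Icc]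
    exact ⟨fun i => (hA f hf i).1, fun i => (hA f hf i).2⟩
  haveI : Fintype A := hAfin.fintype
  set k := Fintype.card A with hkdef
  -- `A` has at most `d ^ r` elements
  have hk : k ≤ d ^ r := by
    have hinj : Function.Injective (fun (f : A) (i : Fin r) =>
        (⟨(f.1 i).toNat, by
          have h := hA f.1 f.2 i
          omega⟩ : Fin d)) := by
      intro f g hfg
      apply Subtype.ext
      funext i
      have h1 := hA f.1 f.2 i
      have h2 := hA g.1 g.2 i
      have := congrFun hfg i
      simp only [Fin.mk.injEq] at this
      omega
    calc k ≤ Fintype.card (Fin r → Fin d) := Fintype.card_le_of_injective _ hinj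
      _ = d ^ r := by simp
  let e : Fin k ≃ A := (Fintype.equivFin A).symm
  let av : Fin k → Fin r → ℤ := fun t => (e t : Fin r → ℤ)
  have hav : ∀ t i, 0 ≤ av t i ∧ av t i ≤ (d : ℤ) - 1 := fun t i => hA _ (e t).2 i
  -- matrix rows
  let rowE : Fin r → (Fin r ⊕ Fin k) → ℤ := fun i =>
    Sum.elim (fun j => if j = i then 1 else 0) (fun t => -(av t i))
  let rowE' : Fin r → (Fin r ⊕ Fin k) → ℤ := fun i =>
    Sum.elim (fun j => if j = i then -1 else 0) (fun t => av t i)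
  let rowP : Fin k → (Fin r ⊕ Fin k) → ℤ := fun t =>
    Sum.elim (fun _ => 0) (fun s => if s = t then -1 else 0)
  let rowS : Fin 2 → (Fin r ⊕ Fin k) → ℤ := fun u =>
    Sum.elim (fun _ => 0) (fun _ => if u = 0 then 1 else -1)
  let M : Matrix ((Fin r ⊕ Fin r) ⊕ (Fin k ⊕ Fin 2)) (Fin r ⊕ Fin k) ℤ :=
    Sum.elim (Sum.elim rowE rowE') (Sum.elim rowP rowS)
  let bb : ((Fin r ⊕ Fin r) ⊕ (Fin k ⊕ Fin 2)) → ℤ :=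
    Sum.elim (fun _ => 0) (Sum.elim (fun _ => 0) (fun u => if u = 0 then 1 else -1))
  -- mulVec on each kind of row
  have hmulE : ∀ (y : (Fin r ⊕ Fin k) → ℤ) (i : Fin r),
      M.mulVec y (Sum.inl (Sum.inl i)) = y (Sum.inl i) - ∑ t, av t i * y (Sum.inr t) := by
    intro y i
    simp [M, rowE, Matrix.mulVec, dotProduct, Fintype.sum_sum_type,
      ite_mul, Finset.sum_ite_eq', neg_mul, sub_eq_add_neg, Finset.sum_neg_distrib]
  have hmulE' : ∀ (y : (Fin r ⊕ Fin k) → ℤ) (i : Fin r),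
      M.mulVec y (Sum.inl (Sum.inr i)) = -y (Sum.inl i) + ∑ t, av t i * y (Sum.inr t) := by
    intro y i
    simp [M, rowE', Matrix.mulVec, dotProduct, Fintype.sum_sum_type,
      ite_mul, Finset.sum_ite_eq', neg_mul]
  have hmulP : ∀ (y : (Fin r ⊕ Fin k) → ℤ) (t : Fin k),
      M.mulVec y (Sum.inr (Sum.inl t)) = -y (Sum.inr t) := by
    intro y t
    simp [M, rowP, Matrix.mulVec, dotProduct, Fintype.sum_sum_type,
      ite_mul, Finset.sum_ite_eq', neg_mul]
  have hmulS : ∀ (y : (Fin r ⊕ Fin k) → ℤ) (u : Fin 2),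
      M.mulVec y (Sum.inr (Sum.inr u)) =
        if u = 0 then ∑ t, y (Sum.inr t) else -∑ t, y (Sum.inr t) := by
    intro y u
    by_cases hu : u = 0 <;>
      simp [M, rowS, Matrix.mulVec, dotProduct, Fintype.sum_sum_type,
        ite_mul, hu, neg_mul, Finset.sum_neg_distrib]
  -- index equivalences
  let eσ : Fin (r + k) ≃ (Fin r ⊕ Fin k) := finSumFinEquiv.symm
  let eρ : Fin ((r + r) + (k + 2)) ≃ ((Fin r ⊕ Fin r) ⊕ (Fin k ⊕ Fin 2)) :=
    finSumFinEquiv.symm.trans (Equiv.sumCongr finSumFinEquiv.symm finSumFinEquiv.symm)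
  have hpow1 : 1 ≤ d ^ r := Nat.one_le_pow _ _ hd
  refine ⟨(r + r) + (k + 2), r + k, ?_, ?_, Nat.le_add_right r k,
    M.submatrix eρ eσ, bb ∘ eρ, ?_, ?_, ?_⟩
  · nlinarith
  · nlinarith
  · -- entry bounds
    intro i j
    show -(d : ℤ) ≤ M (eρ i) (eσ j) ∧ M (eρ i) (eσ j) ≤ (d : ℤ)
    rcases h : eρ i with (ii | ii) | (tt | uu) <;> rcases h2 : eσ j with jj | ss <;>
      simp only [Matrix.submatrix_apply, h, h2, M, rowE, rowE', rowP, rowS,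
        Sum.elim_inl, Sum.elim_inr]
    · constructor <;> split_ifs <;> linarith
    · have := hav ss ii; constructor <;> linarith [this.1, this.2]
    · constructor <;> split_ifs <;> linarith
    · have := hav ss ii; constructor <;> linarith [this.1, this.2]
    · constructor <;> linarith
    · constructor <;> split_ifs <;> linarith
    · constructor <;> linarith
    · constructor <;> split_ifs <;> linarith
  · -- rhs bounds
    intro i
    rcases h : eρ i with (ii | ii) | (tt | uu) <;>
      simp only [Function.comp_apply, h, bb, Sum.elim_inl, Sum.elim_inr]
    · constructor <;> linarith
    · constructor <;> linarith
    · constructor <;> linarith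
    · split_ifs <;> constructor <;> linarith
  · -- the main equivalence
    intro a
    have hcastcast : ∀ j : Fin r,
        (Fin.castLE (Nat.le_add_right r k) j : Fin (r + k)) = Fin.castAdd k j :=
      fun j => rfl
    constructor
    · rintro ⟨x, hx, hbd⟩
      rw [Matrix.submatrix_mulVec_equiv] at hx
      set y : (Fin r ⊕ Fin k) → ℤ := x ∘ eσ.symm with hy
      have hrow : ∀ ri, M.mulVec y ri ≤ bb ri := by
        intro ri
        have := hx (eρ.symm ri)
        simpa [Equiv.apply_symm_apply] using this
      -- selector values
      have hpos : ∀ t, 0 ≤ y (Sum.inr t) := by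
        intro t
        have := hrow (Sum.inr (Sum.inl t))
        rw [hmulP] at this
        simpa [bb] using this
      have hsum : ∑ t, y (Sum.inr t) = 1 := by
        have h0 := hrow (Sum.inr (Sum.inr 0))
        have h1 := hrow (Sum.inr (Sum.inr 1))
        rw [hmulS] at h0 h1
        simp [bb] at h0 h1
        linarith
      obtain ⟨t0, ht0, hother⟩ := exists_indicator_of_sum_one _ hpos hsum
      have hval : ∀ i, y (Sum.inl i) = av t0 i := by
        intro i
        have h0 := hrow (Sum.inl (Sum.inl i))
        have h1 := hrow (Sum.inl (Sum.inr i))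
        rw [hmulE] at h0
        rw [hmulE'] at h1
        simp [bb] at h0 h1
        have hsum : ∑ t, av t i * y (Sum.inr t) = av t0 i := by
          rw [Finset.sum_eq_single t0
            (fun s _ hs => by rw [hother s hs, mul_zero])
            (fun hs => absurd (Finset.mem_univ t0) hs)]
          rw [ht0, mul_one]
        rw [hsum] at h0 h1
        linarith
      have hya : ∀ i, y (Sum.inl i) = a i := by
        intro i
        have : y (Sum.inl i) = x (Fin.castAdd k i) := by
          simp [hy, eσ, Function.comp]
        rw [this, ← hcastcast i, hbd i]
      have haav : a = av t0 := by
        funext i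
        rw [← hya i, hval i]
      rw [haav]
      exact (e t0).2
    · intro ha
      set t0 : Fin k := e.symm ⟨a, ha⟩ with ht0def
      have havt0 : av t0 = a := by
        have h1 : e t0 = ⟨a, ha⟩ := e.apply_symm_apply ⟨a, ha⟩
        show ((e t0 : A) : Fin r → ℤ) = a
        rw [h1]
      set yv : (Fin r ⊕ Fin k) → ℤ :=
        Sum.elim a (fun t => if t = t0 then 1 else 0) with hyv
      refine ⟨yv ∘ eσ, ?_, ?_⟩
      · rw [Matrix.submatrix_mulVec_equiv]
        have hyy : (yv ∘ eσ) ∘ eσ.symm = yv := by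
          funext s; simp
        rw [hyy]
        intro i
        simp only [Function.comp_apply]
        rcases eρ i with (ii | ii) | (tt | uu)
        · rw [hmulE]
          have : ∑ t, av t ii * yv (Sum.inr t) = av t0 ii := by
            simp [hyv, mul_ite, Finset.sum_ite_eq']
          rw [this]
          simp [hyv, bb, havt0]
        · rw [hmulE']
          have : ∑ t, av t ii * yv (Sum.inr t) = av t0 ii := by
            simp [hyv, mul_ite, Finset.sum_ite_eq']
          rw [this]
          simp [hyv, bb, havt0]
        · rw [hmulP]
          simp only [hyv, Sum.elim_inr, bb, Sum.elim_inl]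
          split_ifs <;> simp
        · rw [hmulS]
          have : ∑ t, yv (Sum.inr t) = 1 := by
            simp [hyv, Finset.sum_ite_eq']
          rw [this]
          by_cases hu : uu = 0 <;> simp [hu, bb]
      · intro j
        simp only [Function.comp_apply, hcastcast j, eσ,
          finSumFinEquiv_symm_apply_castAdd]
        simp [hyv]
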